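/- Let p, s, k, q be positive integers with (s-p)k + p + 1 ≤ q, and let F be a family of k-subsets of {1,...,n} with matching number at most s that contains all k-subsets of {1,...,q}. Then for each 1 ≤ i ≤ k-1, the subfamily F_i = {F ∈ F : |F ∩ [q]| = i} has matching number strictly less than (k-1)(p+1)/(k-i). -/
import Mathlib


open Finset

/-- Coordinatewise (shifting) partial order on finite sets of naturals:
`A ≼ B` iff the increasing enumerations satisfy `aₗ ≤ bₗ` for all `l`. -/
def shiftLE (A B : Finset ℕ) : Prop :=
  List.Forall₂ (· ≤ ·) (A.sort (· ≤ ·)) (B.sort (· ≤ ·))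

/-- A family on the ground set `{1,…,n}` is shifted. -/
def IsShifted (n : ℕ) (F : Finset (Finset ℕ)) : Prop :=
  ∀ B ∈ F, ∀ A ⊆ Finset.Icc 1 n, shiftLE A B → A ∈ F

/-- The matching number of `F` is at most `s`. -/
def MatchingLE (F : Finset (Finset ℕ)) (s : ℕ) : Prop :=
  ∀ M ⊆ F, (M : Set (Finset ℕ)).PairwiseDisjoint id → M.card ≤ s

/-- `F` contains `s` pairwise disjoint members. -/
def HasMatching (F : Finset (Finset ℕ)) (s : ℕ) : Prop :=
  ∃ M ⊆ F, (M : Set (Finset ℕ)).PairwiseDisjoint id ∧ M.card = s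

/-- The clique number of `F` (as a `k`-graph on `{1,…,n}`) is at least `q`. -/
def HasClique (n : ℕ) (F : Finset (Finset ℕ)) (k q : ℕ) : Prop :=
  ∃ Q ⊆ Finset.Icc 1 n, Q.card = q ∧ Q.powersetCard k ⊆ F

open Finset

lemma exists_disjoint_subsets (k : ℕ) (hk : 1 ≤ k) :
    ∀ (r : ℕ) (S : Finset ℕ), r * k ≤ S.card →
    ∃ N : Finset (Finset ℕ), (∀ T ∈ N, T ⊆ S ∧ T.card = k) ∧
      (N : Set (Finset ℕ)).PairwiseDisjoint id ∧ N.card = r := by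
  intro r
  induction r with
  | zero => exact fun S _ => ⟨∅, by simp, by simp, rfl⟩
  | succ r ih =>
    intro S hS
    have hk' : k ≤ S.card := le_trans (Nat.le_mul_of_pos_left k (by omega)) hS
    obtain ⟨T, hTS, hTcard⟩ := Finset.exists_subset_card_eq hk'
    have hS' : r * k ≤ (S \ T).card := by
      rw [Finset.card_sdiff_of_subset hTS, hTcard]
      have : (r + 1) * k = r * k + k := by ring
      omega
    obtain ⟨N, hN1, hN2, hN3⟩ := ih (S \ T) hS'
    have hTnotN : T ∉ N := by
      intro hT
      have hsub := (hN1 T hT).1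
      have hne : T.Nonempty := Finset.card_pos.1 (by omega)
      obtain ⟨x, hx⟩ := hne
      exact (Finset.mem_sdiff.1 (hsub hx)).2 hx
    refine ⟨insert T N, ?_, ?_, ?_⟩
    · intro U hU
      rcases Finset.mem_insert.1 hU with rfl | hU
      · exact ⟨hTS, hTcard⟩
      · exact ⟨((hN1 U hU).1).trans Finset.sdiff_subset, (hN1 U hU).2⟩
    · rw [Finset.coe_insert]
      refine hN2.insert ?_
      intro U hU _
      have hsub := (hN1 U hU).1
      exact Finset.disjoint_left.2 fun x hxT hxU => (Finset.mem_sdiff.1 (hsub hxU)).2 hxT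
    · rw [Finset.card_insert_of_notMem hTnotN, hN3]
theorem stmt_7 (n p s k q : ℕ) (hp : 1 ≤ p) (hs : 1 ≤ s) (hk : 1 ≤ k) (hq : 1 ≤ q)
    (hpq : (s - p) * k + p + 1 ≤ q)
    (F : Finset (Finset ℕ)) (hF : F ⊆ (Finset.Icc 1 n).powersetCard k)
    (hmatch : MatchingLE F s)
    (hclq : (Finset.Icc 1 q).powersetCard k ⊆ F) :
    ∀ i, 1 ≤ i → i ≤ k - 1 →
      ∀ M ⊆ F.filter (fun A => (A ∩ Finset.Icc 1 q).card = i),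
        (M : Set (Finset ℕ)).PairwiseDisjoint id →
          M.card * (k - i) < (k - 1) * (p + 1) := by
  intro i hi1 hi2 M hM hMdisj
  have hMF : M ⊆ F := hM.trans (Finset.filter_subset _ _)
  have hms : M.card ≤ s := hmatch M hMF hMdisj
  have hik : i + 1 ≤ k := by omega
  have hcard : ∀ A ∈ M, A.card = k := fun A hA =>
    (Finset.mem_powersetCard.1 (hF (hMF hA))).2
  have hint : ∀ A ∈ M, (A ∩ Finset.Icc 1 q).card = i := fun A hA =>
    (Finset.mem_filter.1 (hM hA)).2
  set m := M.card with hm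
  have key : q < m * i + (s + 1 - m) * k := by
    by_contra hcon
    push_neg at hcon
    set S := Finset.Icc 1 q \ M.biUnion id with hSdef
    have hUnion : (M.biUnion (fun A => A ∩ Finset.Icc 1 q)).card = m * i := by
      rw [Finset.card_biUnion]
      · rw [Finset.sum_congr rfl hint, Finset.sum_const, smul_eq_mul]
      · intro A hA B hB hAB
        exact Finset.disjoint_of_subset_left Finset.inter_subset_left
          (Finset.disjoint_of_subset_right Finset.inter_subset_left
            (hMdisj hA hB hAB))
    have hinter : Finset.Icc 1 q ∩ M.biUnion id = M.biUnion (fun A => A ∩ Finset.Icc 1 q) := by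
      ext x
      simp only [Finset.mem_inter, Finset.mem_biUnion, id_eq]
      tauto
    have hScard : (s + 1 - m) * k ≤ S.card := by
      have h1 := Finset.card_sdiff_add_card_inter (Finset.Icc 1 q) (M.biUnion id)
      rw [← hSdef, hinter, hUnion, Nat.card_Icc] at h1
      omega
    obtain ⟨N, hN1, hN2, hN3⟩ := exists_disjoint_subsets k hk (s + 1 - m) S hScard
    have hNF : ∀ T ∈ N, T ∈ F := fun T hT =>
      hclq (Finset.mem_powersetCard.2
        ⟨((hN1 T hT).1).trans Finset.sdiff_subset, (hN1 T hT).2⟩)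
    have hdisjMN : ∀ A ∈ M, ∀ T ∈ N, Disjoint A T := by
      intro A hA T hT
      refine Finset.disjoint_right.2 fun x hxT hxA => ?_
      have := Finset.mem_sdiff.1 ((hN1 T hT).1 hxT)
      exact this.2 (Finset.mem_biUnion.2 ⟨A, hA, hxA⟩)
    have hMN : Disjoint M N := by
      refine Finset.disjoint_left.2 fun A hA hA' => ?_
      have h1 := hdisjMN A hA A hA'
      have hne : A.Nonempty := Finset.card_pos.1 (by rw [hcard A hA]; omega)
      obtain ⟨x, hx⟩ := hne
      exact (Finset.disjoint_left.1 h1 hx) hx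
    have hPD : ((M ∪ N : Finset (Finset ℕ)) : Set (Finset ℕ)).PairwiseDisjoint id := by
      rw [Finset.coe_union]
      refine hMdisj.union hN2 ?_
      intro A hA T hT _
      exact hdisjMN A (by simpa using hA) T (by simpa using hT)
    have hle := hmatch (M ∪ N) (Finset.union_subset hMF fun T hT => hNF T hT) hPD
    rw [Finset.card_union_of_disjoint hMN, hN3] at hle
    omega
  obtain ⟨j, hj⟩ := Nat.exists_eq_add_of_le hik
  obtain ⟨u, hu⟩ := Nat.exists_eq_add_of_le hms
  have hsm : s + 1 - m = u + 1 := by omega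
  rw [hsm] at key
  have hki : k - i = j + 1 := by omega
  have hk1 : k - 1 = i + j := by omega
  rw [hki, hk1]
  have h3 : m * k = m * i + (m * j + m) := by rw [hj]; ring
  rcases le_or_gt p s with hps | hps
  · obtain ⟨v, hv⟩ := Nat.exists_eq_add_of_le hps
    have hsp : s - p = v := by omega
    rw [hsp] at hpq
    have h1 : m + u = p + v := by omega
    have h2 : m * k + u * k = p * k + v * k := by
      rw [← add_mul, ← add_mul, h1]
    have h4 : (p + 1) * k = (i + j) * (p + 1) + (p + 1) := by rw [hj]; ring
    linarith [key, hpq, h2, h3, h4]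
  · have hsp : s - p = 0 := by omega
    rw [hsp] at hpq
    simp only [Nat.zero_mul, Nat.zero_add] at hpq
    have h2 : (m + u + 1) * k ≤ p * k := Nat.mul_le_mul_right k (by omega)
    have h4 : (p + 1) * k = (i + j) * (p + 1) + (p + 1) := by rw [hj]; ring
    linarith [key, hpq, h2, h3, h4]
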